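/- For any rank-r ramification sequences α ≤ β and any integer n, cδ(β/α) = cδ((n+β)/(n+α)) = cδ((n−α)/(n−β)). Moreover, for any rank-r ramification sequences α ≤ β ≤ γ, cδ(γ/α) ≤ cδ(γ/β) + cδ(β/α). -/

import Mathlib

/-- An arithmetic progression: a proper subset of `ℤ` that is empty, a singleton,
or of the form `n + mℤ` with `m ≥ 2`. -/
def IsAP (Λ : Set ℤ) : Prop :=
  Λ ≠ Set.univ ∧
    (Λ = ∅ ∨ (∃ n : ℤ, Λ = {n}) ∨
      ∃ n m : ℤ, 2 ≤ m ∧ Λ = {x : ℤ | ∃ k : ℤ, x = n + m * k})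
/-- `α i` is increasable: the sequence stays nondecreasing after increasing entry `i` by 1. -/
def Increasable {m : ℕ} (α : Fin m → ℤ) (i : Fin m) : Prop :=
  Monotone (Function.update α i (α i + 1))

/-- `α i` is decreasable: the sequence stays nondecreasing after decreasing entry `i` by 1. -/
def Decreasable {m : ℕ} (α : Fin m → ℤ) (i : Fin m) : Prop :=
  Monotone (Function.update α i (α i - 1))

open Classical in
/-- Upward displacement of a ramification sequence along `Λ`. -/
noncomputable def dispPlus {m : ℕ} (Λ : Set ℤ) (α : Fin m → ℤ) : Fin m → ℤ :=
  fun i => if Increasable α i ∧ α i + (i.val : ℤ) + 1 ∈ Λ then α i + 1 else α i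

open Classical in
/-- Downward displacement of a ramification sequence along `Λ`. -/
noncomputable def dispMinus {m : ℕ} (Λ : Set ℤ) (α : Fin m → ℤ) : Fin m → ℤ :=
  fun i => if Decreasable α i ∧ α i + (i.val : ℤ) ∈ Λ then α i - 1 else α i
/-- `α` and `β` are linked by `Λ` if `α = disp⁻_Λ(β)` and `β = disp⁺_Λ(α)`. -/
def LinkedBy {m : ℕ} (Λ : Set ℤ) (α β : Fin m → ℤ) : Prop :=
  α = dispMinus Λ β ∧ β = dispPlus Λ α

/-- `α` and `β` are linked if they are linked by some arithmetic progression. -/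
def Linked {m : ℕ} (α β : Fin m → ℤ) : Prop :=
  ∃ Λ : Set ℤ, IsAP Λ ∧ LinkedBy Λ α β

/-- The size `|β / α|` of the skew shape `β / α`. -/
def skewSize {m : ℕ} (α β : Fin m → ℤ) : ℤ := ∑ i, (β i - α i)

/-- `β / α` is an `n`-link: `α, β` are linked and `|β / α| = n`. -/
def IsNLink (n : ℤ) {m : ℕ} (α β : Fin m → ℤ) : Prop :=
  Linked α β ∧ skewSize α β = n
/-- A link chain of length `k` from `α` to `β`: a sequence `α = γ⁰ < γ¹ < ⋯ < γᵏ = β` of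
ramification sequences in which each consecutive step is a 1-link or a 2-link. -/
def IsLinkChain {m : ℕ} (α β : Fin m → ℤ) (k : ℕ) (γ : Fin (k+1) → Fin m → ℤ) : Prop :=
  γ 0 = α ∧ γ (Fin.last k) = β ∧ (∀ j, Monotone (γ j)) ∧
    ∀ j : Fin k, IsNLink 1 (γ j.castSucc) (γ j.succ) ∨ IsNLink 2 (γ j.castSucc) (γ j.succ)

/-- The chain threshold `ct(β/α)`: the minimum length of a link chain from `α` to `β`. -/
noncomputable def chainThreshold {m : ℕ} (α β : Fin m → ℤ) : ℕ :=
  sInf {k | ∃ γ : Fin (k+1) → Fin m → ℤ, IsLinkChain α β k γ}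

/-- The displacement difficulty `cδ(β/α) = 2·ct(β/α) − |β/α|`. -/
noncomputable def cdelta {m : ℕ} (α β : Fin m → ℤ) : ℤ :=
  2 * (chainThreshold α β : ℤ) - skewSize α β

section CD
variable {m : ℕ}

lemma cd_mono_add_iff (n : ℤ) (f : Fin m → ℤ) :
    Monotone (fun i => n + f i) ↔ Monotone f := by
  constructor
  · intro h a b hab; have := h hab; simp only at this; omega
  · intro h a b hab; have := h hab; simp only; omega

lemma cd_mono_refl_iff (n : ℤ) (f : Fin m → ℤ) :
    Monotone (fun i : Fin m => n - f i.rev) ↔ Monotone f := by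
  constructor
  · intro h a b hab
    have := h (Fin.rev_le_rev.mpr hab)
    simp only [Fin.rev_rev] at this; omega
  · intro h a b hab
    have : f b.rev ≤ f a.rev := h (Fin.rev_le_rev.mpr hab)
    simp only; omega

lemma cd_update_add (n : ℤ) (f : Fin m → ℤ) (i : Fin m) (c : ℤ) :
    Function.update (fun j => n + f j) i (n + c) = fun j => n + Function.update f i c j := by
  funext j
  rcases eq_or_ne j i with rfl | h
  · simp
  · simp [Function.update_of_ne h]

lemma cd_update_refl (n : ℤ) (f : Fin m → ℤ) (i : Fin m) (c : ℤ) :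
    Function.update (fun j : Fin m => n - f j.rev) i (n - c)
      = fun j => n - Function.update f i.rev c j.rev := by
  funext j
  rcases eq_or_ne j i with rfl | h
  · simp
  · have h2 : j.rev ≠ i.rev := fun hh => h (Fin.rev_injective hh)
    simp [Function.update_of_ne h, Function.update_of_ne h2]

lemma cd_inc_add (n : ℤ) (f : Fin m → ℤ) (i : Fin m) :
    Increasable (fun j => n + f j) i ↔ Increasable f i := by
  unfold Increasable
  have h : Function.update (fun j => n + f j) i ((fun j => n + f j) i + 1)
      = fun j => n + Function.update f i (f i + 1) j := by
    have := cd_update_add n f i (f i + 1)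
    rw [show n + (f i + 1) = (fun j => n + f j) i + 1 from by simp only; ring] at this
    exact this
  rw [h, cd_mono_add_iff]

lemma cd_dec_add (n : ℤ) (f : Fin m → ℤ) (i : Fin m) :
    Decreasable (fun j => n + f j) i ↔ Decreasable f i := by
  unfold Decreasable
  have h : Function.update (fun j => n + f j) i ((fun j => n + f j) i - 1)
      = fun j => n + Function.update f i (f i - 1) j := by
    have := cd_update_add n f i (f i - 1)
    rw [show n + (f i - 1) = (fun j => n + f j) i - 1 from by simp only; ring] at this
    exact this
  rw [h, cd_mono_add_iff]

lemma cd_inc_refl (n : ℤ) (f : Fin m → ℤ) (i : Fin m) :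
    Increasable (fun j : Fin m => n - f j.rev) i ↔ Decreasable f i.rev := by
  unfold Increasable Decreasable
  have h : Function.update (fun j : Fin m => n - f j.rev) i ((fun j : Fin m => n - f j.rev) i + 1)
      = fun j => n - Function.update f i.rev (f i.rev - 1) j.rev := by
    have := cd_update_refl n f i (f i.rev - 1)
    rw [show n - (f i.rev - 1) = (fun j : Fin m => n - f j.rev) i + 1 from by simp only; ring] at this
    exact this
  rw [h, cd_mono_refl_iff]

lemma cd_dec_refl (n : ℤ) (f : Fin m → ℤ) (i : Fin m) :
    Decreasable (fun j : Fin m => n - f j.rev) i ↔ Increasable f i.rev := by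
  unfold Increasable Decreasable
  have h : Function.update (fun j : Fin m => n - f j.rev) i ((fun j : Fin m => n - f j.rev) i - 1)
      = fun j => n - Function.update f i.rev (f i.rev + 1) j.rev := by
    have := cd_update_refl n f i (f i.rev + 1)
    rw [show n - (f i.rev + 1) = (fun j : Fin m => n - f j.rev) i - 1 from by simp only; ring] at this
    exact this
  rw [h, cd_mono_refl_iff]

end CD

section CD2
variable {m : ℕ}

lemma cd_isAP_translate {Λ : Set ℤ} (n : ℤ) (h : IsAP Λ) : IsAP {x | x - n ∈ Λ} := by
  obtain ⟨hu, hc⟩ := h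
  constructor
  · intro he
    apply hu
    rw [Set.eq_univ_iff_forall] at he ⊢
    intro y; have := he (y + n); simpa using this
  · rcases hc with h | ⟨a, h⟩ | ⟨a, q, hq, h⟩
    · left; subst h; ext x; simp
    · right; left
      refine ⟨n + a, ?_⟩
      subst h; ext x
      simp only [Set.mem_setOf_eq, Set.mem_singleton_iff]
      omega
    · right; right
      refine ⟨n + a, q, hq, ?_⟩
      subst h; ext x
      simp only [Set.mem_setOf_eq]
      constructor
      · rintro ⟨k, hk⟩; exact ⟨k, by linarith⟩
      · rintro ⟨k, hk⟩; exact ⟨k, by linarith⟩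

lemma cd_isAP_reflect {Λ : Set ℤ} (c : ℤ) (h : IsAP Λ) : IsAP {x | c - x ∈ Λ} := by
  obtain ⟨hu, hc⟩ := h
  constructor
  · intro he
    apply hu
    rw [Set.eq_univ_iff_forall] at he ⊢
    intro y; have := he (c - y); simpa using this
  · rcases hc with h | ⟨a, h⟩ | ⟨a, q, hq, h⟩
    · left; subst h; ext x; simp
    · right; left
      refine ⟨c - a, ?_⟩
      subst h; ext x
      simp only [Set.mem_setOf_eq, Set.mem_singleton_iff]
      omega
    · right; right
      refine ⟨c - a, q, hq, ?_⟩
      subst h; ext x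
      simp only [Set.mem_setOf_eq]
      constructor
      · rintro ⟨k, hk⟩; exact ⟨-k, by have := mul_neg q k; linarith⟩
      · rintro ⟨k, hk⟩; exact ⟨-k, by have := mul_neg q k; linarith⟩

lemma cd_dispPlus_add (Λ : Set ℤ) (n : ℤ) (f : Fin m → ℤ) :
    dispPlus {x | x - n ∈ Λ} (fun i => n + f i) = fun i => n + dispPlus Λ f i := by
  funext i
  simp only [dispPlus, Set.mem_setOf_eq]
  have hcond : (Increasable (fun j => n + f j) i ∧ n + f i + (i.val : ℤ) + 1 ∈ {x | x - n ∈ Λ})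
      ↔ (Increasable f i ∧ f i + (i.val : ℤ) + 1 ∈ Λ) := by
    rw [cd_inc_add, Set.mem_setOf_eq, show n + f i + (i.val : ℤ) + 1 - n = f i + (i.val : ℤ) + 1 from by ring]
  by_cases h : Increasable f i ∧ f i + (i.val : ℤ) + 1 ∈ Λ
  · rw [if_pos (hcond.mpr h), if_pos h]; ring
  · rw [if_neg (fun hc => h (hcond.mp hc)), if_neg h]

lemma cd_dispMinus_add (Λ : Set ℤ) (n : ℤ) (f : Fin m → ℤ) :
    dispMinus {x | x - n ∈ Λ} (fun i => n + f i) = fun i => n + dispMinus Λ f i := by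
  funext i
  simp only [dispMinus, Set.mem_setOf_eq]
  have hcond : (Decreasable (fun j => n + f j) i ∧ n + f i + (i.val : ℤ) ∈ {x | x - n ∈ Λ})
      ↔ (Decreasable f i ∧ f i + (i.val : ℤ) ∈ Λ) := by
    rw [cd_dec_add, Set.mem_setOf_eq, show n + f i + (i.val : ℤ) - n = f i + (i.val : ℤ) from by ring]
  by_cases h : Decreasable f i ∧ f i + (i.val : ℤ) ∈ Λ
  · rw [if_pos (hcond.mpr h), if_pos h]; ring
  · rw [if_neg (fun hc => h (hcond.mp hc)), if_neg h]

lemma cd_val_rev (i : Fin m) : ((i.rev).val : ℤ) = (m : ℤ) - 1 - (i.val : ℤ) := by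
  have h1 : i.rev.val = m - (i.val + 1) := Fin.val_rev i
  have h2 := i.isLt
  omega

lemma cd_dispPlus_refl (Λ : Set ℤ) (n : ℤ) (f : Fin m → ℤ) :
    dispPlus {x | (n + (m : ℤ)) - x ∈ Λ} (fun i : Fin m => n - f i.rev)
      = fun i => n - dispMinus Λ f i.rev := by
  funext i
  simp only [dispPlus, dispMinus, Set.mem_setOf_eq]
  have hcond : (Increasable (fun j : Fin m => n - f j.rev) i ∧
        n - f i.rev + (i.val : ℤ) + 1 ∈ {x | (n + (m : ℤ)) - x ∈ Λ})
      ↔ (Decreasable f i.rev ∧ f i.rev + ((i.rev).val : ℤ) ∈ Λ) := by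
    rw [cd_inc_refl, Set.mem_setOf_eq,
      show (n + (m : ℤ)) - (n - f i.rev + (i.val : ℤ) + 1) = f i.rev + ((i.rev).val : ℤ) from by
        rw [cd_val_rev]; ring]
  by_cases h : Decreasable f i.rev ∧ f i.rev + ((i.rev).val : ℤ) ∈ Λ
  · rw [if_pos (hcond.mpr h), if_pos h]; ring
  · rw [if_neg (fun hc => h (hcond.mp hc)), if_neg h]

lemma cd_dispMinus_refl (Λ : Set ℤ) (n : ℤ) (f : Fin m → ℤ) :
    dispMinus {x | (n + (m : ℤ)) - x ∈ Λ} (fun i : Fin m => n - f i.rev)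
      = fun i => n - dispPlus Λ f i.rev := by
  funext i
  simp only [dispPlus, dispMinus, Set.mem_setOf_eq]
  have hcond : (Decreasable (fun j : Fin m => n - f j.rev) i ∧
        n - f i.rev + (i.val : ℤ) ∈ {x | (n + (m : ℤ)) - x ∈ Λ})
      ↔ (Increasable f i.rev ∧ f i.rev + ((i.rev).val : ℤ) + 1 ∈ Λ) := by
    rw [cd_dec_refl, Set.mem_setOf_eq,
      show (n + (m : ℤ)) - (n - f i.rev + (i.val : ℤ)) = f i.rev + ((i.rev).val : ℤ) + 1 from by
        rw [cd_val_rev]; ring]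
  by_cases h : Increasable f i.rev ∧ f i.rev + ((i.rev).val : ℤ) + 1 ∈ Λ
  · rw [if_pos (hcond.mpr h), if_pos h]; ring
  · rw [if_neg (fun hc => h (hcond.mp hc)), if_neg h]

lemma cd_linked_add {α β : Fin m → ℤ} (n : ℤ) (h : Linked α β) :
    Linked (fun i => n + α i) (fun i => n + β i) := by
  obtain ⟨Λ, hAP, h1, h2⟩ := h
  exact ⟨{x | x - n ∈ Λ}, cd_isAP_translate n hAP,
    by rw [cd_dispMinus_add, ← h1], by rw [cd_dispPlus_add, ← h2]⟩

lemma cd_linked_refl {α β : Fin m → ℤ} (n : ℤ) (h : Linked α β) :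
    Linked (fun i : Fin m => n - β i.rev) (fun i => n - α i.rev) := by
  obtain ⟨Λ, hAP, h1, h2⟩ := h
  exact ⟨{x | (n + (m : ℤ)) - x ∈ Λ}, cd_isAP_reflect _ hAP,
    by rw [cd_dispMinus_refl, ← h2], by rw [cd_dispPlus_refl, ← h1]⟩

lemma cd_skewSize_add (n : ℤ) (α β : Fin m → ℤ) :
    skewSize (fun i => n + α i) (fun i => n + β i) = skewSize α β := by
  unfold skewSize
  exact Finset.sum_congr rfl (fun i _ => by ring)

lemma cd_skewSize_refl (n : ℤ) (α β : Fin m → ℤ) :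
    skewSize (fun i : Fin m => n - β i.rev) (fun i => n - α i.rev) = skewSize α β := by
  unfold skewSize
  calc ∑ i : Fin m, ((n - α i.rev) - (n - β i.rev))
      = ∑ i : Fin m, (β i.rev - α i.rev) := Finset.sum_congr rfl (fun i _ => by ring)
    _ = ∑ i : Fin m, (β i - α i) :=
        Fintype.sum_bijective Fin.rev Fin.rev_bijective _ _ (fun i => rfl)

end CD2
section CD3
variable {m : ℕ}

lemma cd_isNLink_add {t : ℤ} {α β : Fin m → ℤ} (n : ℤ) (h : IsNLink t α β) :
    IsNLink t (fun i => n + α i) (fun i => n + β i) :=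
  ⟨cd_linked_add n h.1, by rw [cd_skewSize_add]; exact h.2⟩

lemma cd_isNLink_refl {t : ℤ} {α β : Fin m → ℤ} (n : ℤ) (h : IsNLink t α β) :
    IsNLink t (fun i : Fin m => n - β i.rev) (fun i => n - α i.rev) :=
  ⟨cd_linked_refl n h.1, by rw [cd_skewSize_refl]; exact h.2⟩

lemma cd_chain_add {α β : Fin m → ℤ} {k : ℕ} {γ : Fin (k+1) → Fin m → ℤ} (n : ℤ)
    (h : IsLinkChain α β k γ) :
    IsLinkChain (fun i => n + α i) (fun i => n + β i) k (fun j i => n + γ j i) := by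
  obtain ⟨h0, hl, hm, hs⟩ := h
  refine ⟨by show (fun i => n + γ 0 i) = _; rw [h0],
    by show (fun i => n + γ (Fin.last k) i) = _; rw [hl],
    fun j => (cd_mono_add_iff n (γ j)).mpr (hm j), fun j => ?_⟩
  rcases hs j with h | h
  · exact Or.inl (cd_isNLink_add n h)
  · exact Or.inr (cd_isNLink_add n h)

lemma cd_chain_refl {α β : Fin m → ℤ} {k : ℕ} {γ : Fin (k+1) → Fin m → ℤ} (n : ℤ)
    (h : IsLinkChain α β k γ) :
    IsLinkChain (fun i : Fin m => n - β i.rev) (fun i => n - α i.rev) k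
      (fun j i => n - γ j.rev i.rev) := by
  obtain ⟨h0, hl, hm, hs⟩ := h
  refine ⟨?_, ?_, fun j => (cd_mono_refl_iff n _).mpr (hm j.rev), fun j => ?_⟩
  · show (fun i : Fin m => n - γ (Fin.rev 0) i.rev) = _
    rw [show (0 : Fin (k+1)).rev = Fin.last k from by simp, hl]
  · show (fun i : Fin m => n - γ (Fin.last k).rev i.rev) = _
    rw [show (Fin.last k).rev = (0 : Fin (k+1)) from by simp, h0]
  · have hgoal : ∀ t (h : IsNLink t (γ j.rev.castSucc) (γ j.rev.succ)),
        IsNLink t ((fun j i => n - γ j.rev i.rev) j.castSucc)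
          ((fun j i => n - γ j.rev i.rev) j.succ) := by
      intro t h
      show IsNLink t (fun i : Fin m => n - γ j.castSucc.rev i.rev) (fun i : Fin m => n - γ j.succ.rev i.rev)
      rw [Fin.rev_castSucc, Fin.rev_succ]
      exact cd_isNLink_refl n h
    rcases hs j.rev with h | h
    · exact Or.inl (hgoal 1 h)
    · exact Or.inr (hgoal 2 h)

lemma cd_ct_add (n : ℤ) (α β : Fin m → ℤ) :
    chainThreshold α β = chainThreshold (fun i => n + α i) (fun i => n + β i) := by
  unfold chainThreshold
  congr 1
  ext k
  simp only [Set.mem_setOf_eq]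
  constructor
  · rintro ⟨γ, hγ⟩; exact ⟨_, cd_chain_add n hγ⟩
  · rintro ⟨γ, hγ⟩
    have h2 := cd_chain_add (-n) hγ
    have e1 : (fun i : Fin m => -n + (n + α i)) = α := by funext i; ring
    have e2 : (fun i : Fin m => -n + (n + β i)) = β := by funext i; ring
    rw [e1, e2] at h2
    exact ⟨_, h2⟩

lemma cd_ct_refl (n : ℤ) (α β : Fin m → ℤ) :
    chainThreshold α β = chainThreshold (fun i => n - β i.rev) (fun i => n - α i.rev) := by
  unfold chainThreshold
  congr 1
  ext k
  simp only [Set.mem_setOf_eq]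
  constructor
  · rintro ⟨γ, hγ⟩; exact ⟨_, cd_chain_refl n hγ⟩
  · rintro ⟨γ, hγ⟩
    have h2 := cd_chain_refl n hγ
    have e1 : (fun i : Fin m => n - (fun i : Fin m => n - α i.rev) i.rev) = α := by
      funext i; simp only [Fin.rev_rev]; ring
    have e2 : (fun i : Fin m => n - (fun i : Fin m => n - β i.rev) i.rev) = β := by
      funext i; simp only [Fin.rev_rev]; ring
    rw [e1, e2] at h2
    exact ⟨_, h2⟩

end CD3
section CD4
variable {m : ℕ}

lemma cd_isNLink_update {α : Fin m → ℤ} (hα : Monotone α) (i : Fin m)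
    (hinc : Increasable α i) :
    IsNLink 1 α (Function.update α i (α i + 1)) := by
  set b := Function.update α i (α i + 1) with hb
  have hbi : b i = α i + 1 := Function.update_self i _ α
  have hbne : ∀ j, j ≠ i → b j = α j := fun j hj => Function.update_of_ne hj _ α
  have hbmono : Monotone b := hinc
  have key : ∀ j : Fin m, j ≠ i → α j + (j.val : ℤ) ≠ α i + (i.val : ℤ) := by
    intro j hne heq
    rcases hne.lt_or_gt with hlt | hlt
    · have h1 : α j ≤ α i := hα hlt.le
      have h2 : (j.val : ℤ) < (i.val : ℤ) := by exact_mod_cast (Fin.lt_def.mp hlt)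
      omega
    · have h1 : α i ≤ α j := hα hlt.le
      have h2 : (i.val : ℤ) < (j.val : ℤ) := by exact_mod_cast (Fin.lt_def.mp hlt)
      omega
  have key2 : ∀ j : Fin m, j ≠ i → α j + (j.val : ℤ) ≠ α i + (i.val : ℤ) + 1 := by
    intro j hne heq
    rcases hne.lt_or_gt with hlt | hlt
    · have h1 : α j ≤ α i := hα hlt.le
      have h2 : (j.val : ℤ) < (i.val : ℤ) := by exact_mod_cast (Fin.lt_def.mp hlt)
      omega
    · have h1 : α i + 1 ≤ α j := by
        have h3 := hbmono hlt.le
        rw [hbi, hbne j hne] at h3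
        exact h3
      have h2 : (i.val : ℤ) < (j.val : ℤ) := by exact_mod_cast (Fin.lt_def.mp hlt)
      omega
  refine ⟨⟨{α i + (i.val : ℤ) + 1}, ?_, ?_, ?_⟩, ?_⟩
  · constructor
    · intro he
      have : α i + (i.val : ℤ) + 2 ∈ ({α i + (i.val : ℤ) + 1} : Set ℤ) :=
        he ▸ Set.mem_univ _
      rw [Set.mem_singleton_iff] at this
      omega
    · exact Or.inr (Or.inl ⟨_, rfl⟩)
  · -- α = dispMinus Λ b
    funext j
    simp only [dispMinus, Set.mem_singleton_iff]
    rcases eq_or_ne j i with rfl | hne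
    · have hdec : Decreasable b j := by
        unfold Decreasable
        have he : Function.update b j (b j - 1) = α := by
          funext j'
          rcases eq_or_ne j' j with rfl | hne'
          · rw [Function.update_self, hbi]; ring
          · rw [Function.update_of_ne hne', hbne j' hne']
        rw [he]; exact hα
      rw [if_pos ⟨hdec, Set.mem_singleton_iff.mpr (by rw [hbi]; ring)⟩, hbi]
      ring
    · rw [if_neg, hbne j hne]
      rintro ⟨-, hmem⟩
      rw [hbne j hne, Set.mem_singleton_iff] at hmem
      exact key2 j hne (by linarith)
  · -- b = dispPlus Λ α
    funext j
    simp only [dispPlus, Set.mem_singleton_iff]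
    rcases eq_or_ne j i with rfl | hne
    · rw [if_pos ⟨hinc, rfl⟩, hbi]
    · rw [if_neg, hbne j hne]
      rintro ⟨-, hmem⟩
      rw [Set.mem_singleton_iff] at hmem
      exact key j hne (by linarith)
  · -- skewSize = 1
    unfold skewSize
    have he : ∀ j : Fin m, b j - α j = if j = i then 1 else 0 := by
      intro j
      rcases eq_or_ne j i with rfl | hne
      · rw [hbi]; simp
      · rw [hbne j hne]; simp [hne]
    rw [Finset.sum_congr rfl (fun j _ => he j)]
    simp

lemma cd_chain_cons {α α' β : Fin m → ℤ} {k : ℕ} {γ : Fin (k+1) → Fin m → ℤ}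
    (hα : Monotone α)
    (hstep : IsNLink 1 α α' ∨ IsNLink 2 α α')
    (h : IsLinkChain α' β k γ) :
    IsLinkChain α β (k+1) (Fin.cons α γ) := by
  obtain ⟨h0, hl, hm, hs⟩ := h
  refine ⟨rfl, ?_, ?_, ?_⟩
  · have hlast : Fin.last (k+1) = (Fin.last k).succ := rfl
    rw [hlast, Fin.cons_succ]
    exact hl
  · intro j
    induction j using Fin.cases with
    | zero => simpa using hα
    | succ j' => rw [Fin.cons_succ]; exact hm j'
  · intro j
    induction j using Fin.cases with
    | zero =>
      rw [show ((0 : Fin (k+1)).castSucc) = (0 : Fin (k+2)) from rfl, Fin.cons_zero,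
        show ((0 : Fin (k+1)).succ) = ((0 : Fin (k+1)).succ) from rfl, Fin.cons_succ, h0]
      exact hstep
    | succ j' =>
      rw [← Fin.succ_castSucc, Fin.cons_succ, Fin.cons_succ]
      exact hs j'

lemma cd_chain_exists_aux {β : Fin m → ℤ} (hβ : Monotone β) :
    ∀ N : ℕ, ∀ α : Fin m → ℤ, Monotone α → α ≤ β → skewSize α β = N →
      ∃ k, ∃ γ : Fin (k+1) → Fin m → ℤ, IsLinkChain α β k γ := by
  intro N
  induction N with
  | zero =>
    intro α hα hle hN
    have hab : α = β := by
      funext i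
      by_contra hne
      have hi : α i < β i := lt_of_le_of_ne (hle i) hne
      have hpos : 0 < skewSize α β := by
        unfold skewSize
        exact Finset.sum_pos' (fun j _ => by have h := hle j; simp only [sub_nonneg]; exact h)
          ⟨i, Finset.mem_univ i, by simp only [sub_pos]; exact hi⟩
      rw [hN] at hpos
      simp at hpos
    subst hab
    exact ⟨0, fun _ => α, rfl, rfl, fun _ => hα, fun j => j.elim0⟩
  | succ N ih =>
    intro α hα hle hN
    classical
    have hex : ∃ i, α i < β i := by
      by_contra hc
      push_neg at hc
      have hab : α = β := funext fun i => le_antisymm (hle i) (hc i)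
      subst hab
      have hz : skewSize α α = 0 := by unfold skewSize; simp
      rw [hz] at hN
      exact Nat.succ_ne_zero N (by exact_mod_cast hN.symm)
    obtain ⟨i₀, hi₀, hmax⟩ : ∃ i₀, (α i₀ < β i₀) ∧ ∀ j, α j < β j → j ≤ i₀ := by
      set s := Finset.univ.filter (fun i => α i < β i) with hs
      have hsne : s.Nonempty := by
        obtain ⟨i, hi⟩ := hex
        exact ⟨i, by simp [hs, hi]⟩
      refine ⟨s.max' hsne, ?_, ?_⟩
      · have := s.max'_mem hsne
        simp only [hs, Finset.mem_filter, Finset.mem_univ, true_and] at this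
        exact this
      · intro j hj
        exact s.le_max' j (by simp [hs, hj])
    have heq : ∀ j, i₀ < j → α j = β j := by
      intro j hj
      by_contra hne2
      exact absurd (hmax j (lt_of_le_of_ne (hle j) hne2)) (not_le.mpr hj)
    have hinc : Increasable α i₀ := by
      intro a c hac
      rcases eq_or_ne a i₀ with ha | ha
      · rcases eq_or_ne c i₀ with hc2 | hc2
        · rw [ha, hc2]
        · have hlt : i₀ < c := lt_of_le_of_ne (ha ▸ hac) (Ne.symm hc2)
          rw [ha, Function.update_self, Function.update_of_ne hc2]
          have h1 : α c = β c := heq c hlt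
          have h2 : β i₀ ≤ β c := hβ hlt.le
          linarith
      · rcases eq_or_ne c i₀ with hc2 | hc2
        · rw [Function.update_of_ne ha, hc2, Function.update_self]
          have h3 : α a ≤ α i₀ := hα (hc2 ▸ hac)
          linarith
        · rw [Function.update_of_ne ha, Function.update_of_ne hc2]
          exact hα hac
    set α' := Function.update α i₀ (α i₀ + 1) with hα'
    have hle' : α' ≤ β := by
      intro j
      rcases eq_or_ne j i₀ with rfl | hne
      · rw [hα', Function.update_self]; linarith
      · rw [hα', Function.update_of_ne hne]; exact hle j
    have hlink := cd_isNLink_update hα i₀ hinc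
    have hsz : skewSize α' β = N := by
      have hadd : skewSize α α' + skewSize α' β = skewSize α β := by
        unfold skewSize
        rw [← Finset.sum_add_distrib]
        exact Finset.sum_congr rfl (fun j _ => by ring)
      have h1 : skewSize α α' = 1 := hlink.2
      rw [hN] at hadd
      push_cast at hadd ⊢
      linarith
    obtain ⟨k, γ, hγ⟩ := ih α' hinc hle' hsz
    exact ⟨k + 1, Fin.cons α γ, cd_chain_cons hα (Or.inl hlink) hγ⟩

lemma cd_chain_exists {α β : Fin m → ℤ} (hα : Monotone α) (hβ : Monotone β) (hle : α ≤ β) :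
    ∃ k, ∃ γ : Fin (k+1) → Fin m → ℤ, IsLinkChain α β k γ := by
  have hnn : 0 ≤ skewSize α β :=
    Finset.sum_nonneg fun i _ => by have h := hle i; simp only [sub_nonneg]; exact h
  exact cd_chain_exists_aux hβ (skewSize α β).toNat α hα hle (Int.toNat_of_nonneg hnn).symm

lemma cd_chain_append {β γ : Fin m → ℤ} {k2 : ℕ} {c2 : Fin (k2+1) → Fin m → ℤ}
    (h2 : IsLinkChain β γ k2 c2) :
    ∀ k1 : ℕ, ∀ α : Fin m → ℤ, ∀ c1 : Fin (k1+1) → Fin m → ℤ,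
      IsLinkChain α β k1 c1 → ∃ c : Fin (k2+k1+1) → Fin m → ℤ, IsLinkChain α γ (k2+k1) c := by
  intro k1
  induction k1 with
  | zero =>
    intro α c1 h1
    obtain ⟨h0, hl, -, -⟩ := h1
    have hab : α = β := by
      rw [← h0, ← hl]
      congr 1
    subst hab
    exact ⟨c2, h2⟩
  | succ k1 ih =>
    intro α c1 h1
    obtain ⟨h0, hl, hm, hs⟩ := h1
    have htail : IsLinkChain (c1 (Fin.succ 0)) β k1 (fun j => c1 j.succ) := by
      refine ⟨rfl, ?_, fun j => hm _, fun j => ?_⟩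
      · show c1 (Fin.last k1).succ = β
        rw [Fin.succ_last]
        exact hl
      · have hst := hs j.succ
        rw [← Fin.succ_castSucc] at hst
        exact hst
    obtain ⟨c, hc⟩ := ih (c1 (Fin.succ 0)) (fun j => c1 j.succ) htail
    have hstep := hs 0
    rw [Fin.castSucc_zero, h0] at hstep
    have hαmono : Monotone α := h0 ▸ hm 0
    exact ⟨Fin.cons α c, cd_chain_cons hαmono hstep hc⟩

lemma cd_ct_subadd {α β γ : Fin m → ℤ} (hα : Monotone α) (hβ : Monotone β) (hγ : Monotone γ)
    (h1 : α ≤ β) (h2 : β ≤ γ) :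
    chainThreshold α γ ≤ chainThreshold α β + chainThreshold β γ := by
  have ne1 : {k | ∃ c : Fin (k+1) → Fin m → ℤ, IsLinkChain α β k c}.Nonempty := by
    obtain ⟨k, c, hc⟩ := cd_chain_exists hα hβ h1
    exact ⟨k, c, hc⟩
  have ne2 : {k | ∃ c : Fin (k+1) → Fin m → ℤ, IsLinkChain β γ k c}.Nonempty := by
    obtain ⟨k, c, hc⟩ := cd_chain_exists hβ hγ h2
    exact ⟨k, c, hc⟩
  obtain ⟨c1, hc1⟩ := Nat.sInf_mem ne1
  obtain ⟨c2, hc2⟩ := Nat.sInf_mem ne2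
  obtain ⟨c, hc⟩ := cd_chain_append hc2 _ α c1 hc1
  have hle : chainThreshold α γ ≤ chainThreshold β γ + chainThreshold α β := by
    unfold chainThreshold
    exact Nat.sInf_le ⟨c, hc⟩
  omega

end CD4

/-- Displacement difficulty is invariant under translation `α ↦ n + α` and reflection
`α ↦ n − α` (where `(n−α)_i = n − α_{r−i}`), and is subadditive:
`cδ(γ/α) ≤ cδ(γ/β) + cδ(β/α)` for `α ≤ β ≤ γ`. -/
theorem cdelta_invariance_subadditive (r : ℕ) :
    (∀ (α β : Fin (r+1) → ℤ), Monotone α → Monotone β → α ≤ β → ∀ n : ℤ,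
      cdelta α β = cdelta (fun i => n + α i) (fun i => n + β i) ∧
      cdelta α β = cdelta (fun i => n - β i.rev) (fun i => n - α i.rev)) ∧
    (∀ (α β γ : Fin (r+1) → ℤ), Monotone α → Monotone β → Monotone γ →
      α ≤ β → β ≤ γ → cdelta α γ ≤ cdelta β γ + cdelta α β) := by
  constructor
  · intro α β _ _ _ n
    constructor
    · unfold cdelta
      rw [← cd_ct_add n α β, cd_skewSize_add]
    · unfold cdelta
      rw [← cd_ct_refl n α β, cd_skewSize_refl]
  · intro α β γ hα hβ hγ h1 h2
    have hct := cd_ct_subadd hα hβ hγ h1 h2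
    have hss : skewSize α γ = skewSize α β + skewSize β γ := by
      unfold skewSize
      rw [← Finset.sum_add_distrib]
      exact Finset.sum_congr rfl (fun j _ => by ring)
    unfold cdelta
    have hcast : (chainThreshold α γ : ℤ) ≤ (chainThreshold α β : ℤ) + (chainThreshold β γ : ℤ) := by
      exact_mod_cast hct
    linarith
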